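/- For every natural number q ≥ 2, the digamma function satisfies Σ_{r=1}^{q−1} ψ(r/q) = −(q − 1)·γ − q · log q, where γ is the Euler–Mascheroni constant. -/

import Mathlib

open Real Set Filter Topology

/-- The digamma function, the logarithmic derivative of the real Gamma function. -/
noncomputable def digamma (x : ℝ) : ℝ := deriv (fun t => Real.log (Real.Gamma t)) x

lemma gamma_diff_aux {x : ℝ} (hx : 0 < x) : DifferentiableAt ℝ Real.Gamma x :=
  Real.differentiableAt_Gamma fun m => ((neg_nonpos.mpr m.cast_nonneg).trans_lt hx).ne'

lemma hasDerivAt_logGamma {x : ℝ} (hx : 0 < x) :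
    HasDerivAt (fun t => Real.log (Real.Gamma t)) (digamma x) x := by
  have hd : DifferentiableAt ℝ (fun t => Real.log (Real.Gamma t)) x :=
    (gamma_diff_aux hx).log (Real.Gamma_pos_of_pos hx).ne'
  exact hd.hasDerivAt

lemma digamma_one : digamma 1 = -Real.eulerMascheroniConstant := by
  rw [digamma, deriv.log (gamma_diff_aux one_pos) (by rw [Real.Gamma_one]; norm_num),
    Real.Gamma_one, div_one, Real.eulerMascheroniConstant_eq_neg_deriv, neg_neg]

lemma convexOn_comp_affine {g : ℝ → ℝ} (hg : ConvexOn ℝ (Ioi 0) g) {a b : ℝ}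
    (ha : 0 < a) (hb : 0 ≤ b) : ConvexOn ℝ (Ioi 0) (fun x => g (a * x + b)) := by
  refine ⟨convex_Ioi 0, fun x hx y hy p r hp hr hpr => ?_⟩
  have hx' : a * x + b ∈ Ioi (0:ℝ) := by
    have := mem_Ioi.mp hx; simp only [mem_Ioi]; positivity
  have hy' : a * y + b ∈ Ioi (0:ℝ) := by
    have := mem_Ioi.mp hy; simp only [mem_Ioi]; positivity
  have h := hg.2 hx' hy' hp hr hpr
  have harg : p * (a * x + b) + r * (a * y + b) = a * (p * x + r * y) + b := by
    linear_combination b * hpr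
  simp only [smul_eq_mul] at h ⊢
  rw [harg] at h
  exact h

lemma convexOn_finset_sum {ι : Type*} (s : Finset ι) (f : ι → ℝ → ℝ)
    (h : ∀ i ∈ s, ConvexOn ℝ (Ioi 0) (f i)) :
    ConvexOn ℝ (Ioi 0) (fun x => ∑ i ∈ s, f i x) := by
  classical
  induction s using Finset.induction with
  | empty => simpa using convexOn_const (0:ℝ) (convex_Ioi (0:ℝ))
  | @insert i s hi ih =>
    simp only [Finset.sum_insert hi]
    exact (h i (Finset.mem_insert_self _ _)).add
      (ih fun j hj => h j (Finset.mem_insert_of_mem hj))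

/-- Auxiliary product for the Gauss multiplication formula. -/
noncomputable def gaussP (q : ℕ) (s : ℝ) : ℝ :=
  ∏ r ∈ Finset.range q, Real.Gamma ((s + r) / q)

/-- Auxiliary function: `q^s * gaussP q s`, normalized to be 1 at 1. -/
noncomputable def gaussG (q : ℕ) (s : ℝ) : ℝ :=
  (q : ℝ) ^ s * gaussP q s / ((q : ℝ) * gaussP q 1)

lemma gaussP_pos {q : ℕ} (hq : 0 < q) {s : ℝ} (hs : 0 < s) : 0 < gaussP q s := by
  have hq' : (0:ℝ) < q := Nat.cast_pos.mpr hq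
  refine Finset.prod_pos fun r _ => Real.Gamma_pos_of_pos ?_
  positivity

lemma gaussP_add_one {q : ℕ} (hq : 0 < q) {s : ℝ} (hs : 0 < s) :
    gaussP q (s + 1) = (s / q) * gaussP q s := by
  have hq' : (0:ℝ) < q := Nat.cast_pos.mpr hq
  have key := Finset.prod_range_succ' (fun k : ℕ => Real.Gamma ((s + (k:ℝ)) / q)) q
  rw [Finset.prod_range_succ] at key
  push_cast at key
  have h1 : gaussP q (s + 1) = ∏ r ∈ Finset.range q, Real.Gamma ((s + ((r:ℝ) + 1)) / q) := by
    unfold gaussP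
    refine Finset.prod_congr rfl fun r _ => ?_
    congr 1
    ring
  have h0 : ((s + 0) / q : ℝ) = s / q := by ring
  have h2 : ((s + q) / q : ℝ) = s / q + 1 := by field_simp
  have hΓ : Real.Gamma (s / q + 1) = (s / q) * Real.Gamma (s / q) :=
    Real.Gamma_add_one (by positivity)
  rw [h0, h2, hΓ] at key
  have hg : Real.Gamma (s / q) ≠ 0 := (Real.Gamma_pos_of_pos (by positivity)).ne'
  rw [h1]
  apply mul_right_cancel₀ hg
  rw [← key]
  unfold gaussP
  ring

lemma gaussG_eq_Gamma {q : ℕ} (hq : 2 ≤ q) : EqOn (gaussG q) Real.Gamma (Ioi (0:ℝ)) := by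
  have hq0 : 0 < q := by omega
  have hq' : (0:ℝ) < q := by exact_mod_cast hq0
  have hq1 : (1:ℝ) ≤ q := by exact_mod_cast Nat.one_le_of_lt hq
  have hP1 : (0:ℝ) < gaussP q 1 := gaussP_pos hq0 one_pos
  have hC : (0:ℝ) < (q : ℝ) * gaussP q 1 := by positivity
  refine Real.eq_Gamma_of_log_convex ?_ ?_ ?_ ?_
  · -- log-convexity
    have heq : EqOn (Real.log ∘ gaussG q)
        (fun s => s * Real.log q +
          (∑ r ∈ Finset.range q, Real.log (Real.Gamma ((1/q) * s + (r:ℝ)/q)))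
          - Real.log ((q:ℝ) * gaussP q 1)) (Ioi 0) := by
      intro s hs
      have hs' : (0:ℝ) < s := hs
      have hGpos : (0:ℝ) < gaussP q s := gaussP_pos hq0 hs'
      simp only [Function.comp_apply, gaussG]
      rw [Real.log_div (by positivity) (by positivity),
        Real.log_mul (by positivity) hGpos.ne', Real.log_rpow hq']
      unfold gaussP
      rw [Real.log_prod (fun r _ => (Real.Gamma_pos_of_pos (by positivity)).ne')]
      congr 1
      congr 1
      refine Finset.sum_congr rfl fun r _ => ?_
      congr 1
      field_simp
    refine (ConvexOn.congr ?_ heq.symm)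
    refine (ConvexOn.add ?_ ?_).add_const _
    · have := (convexOn_id (convex_Ioi (0:ℝ))).smul (Real.log_nonneg hq1)
      simpa only [smul_eq_mul, mul_comm, id] using this
    · refine convexOn_finset_sum _ _ fun r _ => ?_
      exact convexOn_comp_affine Real.convexOn_log_Gamma (by positivity) (by positivity)
  · -- functional equation
    intro y hy
    have h := gaussP_add_one hq0 hy
    unfold gaussG
    rw [h, Real.rpow_add hq' y 1, Real.rpow_one]
    field_simp
  · intro y hy
    have : (0:ℝ) < gaussP q y := gaussP_pos hq0 hy
    unfold gaussG
    positivity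
  · unfold gaussG
    rw [Real.rpow_one]
    field_simp

lemma gauss_digamma_sum {q : ℕ} (hq : 2 ≤ q) :
    ∑ r ∈ Finset.range q, digamma ((1 + r : ℝ) / q) =
      -(q : ℝ) * Real.eulerMascheroniConstant - q * Real.log q := by
  have hq0 : 0 < q := by omega
  have hq' : (0:ℝ) < q := by exact_mod_cast hq0
  set f : ℝ → ℝ := fun t => Real.log (Real.Gamma t) with hf
  -- identity of functions near 1
  have heqn : f =ᶠ[𝓝 (1:ℝ)] fun s => s * Real.log q +
      (∑ r ∈ Finset.range q, f ((s + r) / q)) - Real.log ((q:ℝ) * gaussP q 1) := by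
    filter_upwards [Ioi_mem_nhds one_pos] with s hs
    have hs' : (0:ℝ) < s := hs
    have h1 : Real.Gamma s = gaussG q s := (gaussG_eq_Gamma hq hs).symm
    have hGpos : (0:ℝ) < gaussP q s := gaussP_pos hq0 hs'
    have hP1 : (0:ℝ) < gaussP q 1 := gaussP_pos hq0 one_pos
    simp only [hf]
    rw [h1]
    unfold gaussG
    rw [Real.log_div (by positivity) (by positivity), Real.log_mul (by positivity) hGpos.ne',
      Real.log_rpow hq']
    unfold gaussP
    rw [Real.log_prod (fun r _ => (Real.Gamma_pos_of_pos (by positivity)).ne')]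
  -- derivative of RHS at 1
  have hR : HasDerivAt (fun s => s * Real.log q +
      (∑ r ∈ Finset.range q, f ((s + r) / q)) - Real.log ((q:ℝ) * gaussP q 1))
      (Real.log q + ∑ r ∈ Finset.range q, digamma ((1 + r : ℝ) / q) * (1 / q)) 1 := by
    refine HasDerivAt.sub_const _ ?_
    refine HasDerivAt.add ?_ ?_
    · simpa using (hasDerivAt_id (1:ℝ)).mul_const (Real.log q)
    · refine HasDerivAt.fun_sum fun r _ => ?_
      have hpos : (0:ℝ) < (1 + r : ℝ) / q := by positivity
      have hinner : HasDerivAt (fun s : ℝ => (s + r) / q) (1 / q) 1 :=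
        ((hasDerivAt_id (1:ℝ)).add_const (r:ℝ)).div_const q
      have houter := hasDerivAt_logGamma hpos
      have := HasDerivAt.comp (1:ℝ) (by simpa using houter) hinner
      simpa [Function.comp_def] using this
  have hL : deriv f 1 = -Real.eulerMascheroniConstant := by
    have : deriv f 1 = digamma 1 := rfl
    rw [this, digamma_one]
  have hderiv : deriv f 1 = Real.log q +
      ∑ r ∈ Finset.range q, digamma ((1 + r : ℝ) / q) * (1 / q) := by
    rw [heqn.deriv_eq, hR.deriv]
  rw [hL] at hderiv
  have hsum : ∑ r ∈ Finset.range q, digamma ((1 + r : ℝ) / q) * (1 / q) =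
      (∑ r ∈ Finset.range q, digamma ((1 + r : ℝ) / q)) / q := by
    rw [Finset.sum_div]; exact Finset.sum_congr rfl fun r _ => by ring
  rw [hsum] at hderiv
  have := hderiv
  field_simp at this
  linarith [this]

theorem digamma_sum_rationals (q : ℕ) (hq : 2 ≤ q) :
    ∑ r ∈ Finset.Ico 1 q, digamma ((r : ℝ) / q) =
      -((q : ℝ) - 1) * Real.eulerMascheroniConstant - q * Real.log q := by
  have key := gauss_digamma_sum hq
  have hq0 : 0 < q := by omega
  have hq' : (0:ℝ) < q := by exact_mod_cast hq0
  -- split last term off the range-q sum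
  obtain ⟨m, rfl⟩ : ∃ m, q = m + 1 := ⟨q - 1, by omega⟩
  rw [Finset.sum_range_succ] at key
  have hlast : ((1 + m : ℝ)) / (m + 1 : ℕ) = 1 := by
    push_cast; rw [div_eq_one_iff_eq (by positivity)]; ring
  rw [hlast, digamma_one] at key
  have hreindex : ∑ r ∈ Finset.Ico 1 (m + 1), digamma ((r : ℝ) / (m + 1 : ℕ)) =
      ∑ r ∈ Finset.range m, digamma ((1 + r : ℝ) / (m + 1 : ℕ)) := by
    rw [Finset.sum_Ico_eq_sum_range]
    simp only [Nat.add_sub_cancel]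
    exact Finset.sum_congr rfl fun r _ => by push_cast; ring_nf
  rw [hreindex]
  push_cast at key ⊢
  linarith [key]
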